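/- Suppose p ∈ E is nonzero, satisfies w₊ p = −p, and spans the full (−1)-eigenspace of w₊, i.e., {x ∈ E : w₊ x = −x} = ℂ·p. Then exactly one of the following holds: p ∈ E_0; or k is even and p ∈ E_{k/2}; or there is an integer ℓ with 0 < ℓ < k/2 such that p ∈ E_ℓ + E_{−ℓ}. -/

import Mathlib

/-- The `ζ^ℓ`-eigenspace `E_ℓ = ker (r - ζ^ℓ • id)` of a linear map `r`. -/
noncomputable def rEig {E : Type*} [AddCommGroup E] [Module ℂ E]
    (r : E →ₗ[ℂ] E) (ζ : ℂ) (ℓ : ℤ) : Submodule ℂ E :=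
  LinearMap.ker (r - ζ ^ ℓ • 1)

open Finset

namespace Stmt5Aux
variable {E : Type*} [AddCommGroup E] [Module ℂ E]

noncomputable def proj (r : Module.End ℂ E) (k : ℕ) (u : ℂ) : Module.End ℂ E :=
  (k : ℂ)⁻¹ • ∑ j ∈ range k, u⁻¹ ^ j • r ^ j

lemma r_mul_proj (r : Module.End ℂ E) {k : ℕ} (hk : k ≠ 0) {u : ℂ}
    (hu : u ^ k = 1) (hr : r ^ k = 1) :
    r * proj r k u = u • proj r k u := by
  have hu0 : u ≠ 0 := by rintro rfl; simp [zero_pow hk] at hu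
  have hterm : ∀ j : ℕ, u⁻¹ ^ j • r ^ (j + 1) = (u * u⁻¹ ^ (j + 1)) • r ^ (j + 1) := by
    intro j
    congr 1
    rw [pow_succ, ← mul_assoc]
    field_simp
  unfold proj
  rw [mul_smul_comm, smul_comm, Finset.mul_sum]
  congr 1
  have : ∀ j ∈ range k, r * u⁻¹ ^ j • r ^ j = u • u⁻¹ ^ j • r ^ j +
      ((u * u⁻¹ ^ (j + 1)) • r ^ (j + 1) - (u * u⁻¹ ^ j) • r ^ j) := by
    intro j _
    rw [← hterm j, mul_smul_comm, ← pow_succ']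
    rw [smul_smul]
    abel
  rw [Finset.sum_congr rfl this, Finset.sum_add_distrib, Finset.sum_range_sub
    (f := fun j => (u * u⁻¹ ^ j) • r ^ j)]
  have : (u * u⁻¹ ^ k) • r ^ k - (u * u⁻¹ ^ 0) • r ^ 0 = 0 := by
    rw [hr, inv_pow, hu, pow_zero]
    simp
  rw [this, add_zero, Finset.smul_sum]

lemma proj_apply_eig (r : Module.End ℂ E) {k : ℕ} (hk : k ≠ 0) {u v : ℂ}
    (hu : u ^ k = 1) (hv : v ^ k = 1) {x : E} (hx : r x = u • x) :
    proj r k v x = if u = v then x else 0 := by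
  have hu0 : u ≠ 0 := by rintro rfl; simp [zero_pow hk] at hu
  have hv0 : v ≠ 0 := by rintro rfl; simp [zero_pow hk] at hv
  have hpow : ∀ j : ℕ, (r ^ j) x = u ^ j • x := by
    intro j
    induction j with
    | zero => simp
    | succ n ih => rw [pow_succ', Module.End.mul_apply, ih, map_smul, hx, smul_smul, ← pow_succ]
  have : proj r k v x = ((k : ℂ)⁻¹ * ∑ j ∈ range k, (u / v) ^ j) • x := by
    unfold proj
    rw [LinearMap.smul_apply, LinearMap.sum_apply]
    rw [mul_smul]
    congr 1
    rw [Finset.sum_smul]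
    refine Finset.sum_congr rfl fun j _ => ?_
    rw [LinearMap.smul_apply, hpow, smul_smul, div_pow, div_eq_mul_inv, mul_comm, ← inv_pow]
  rw [this]
  rcases eq_or_ne u v with h | h
  · rw [if_pos h, h, div_self hv0]
    simp only [one_pow, Finset.sum_const, card_range, nsmul_eq_mul, mul_one]
    rw [inv_mul_cancel₀ (Nat.cast_ne_zero.mpr hk), one_smul]
  · rw [if_neg h]
    have hne1 : u / v ≠ 1 := fun hh => h (by field_simp at hh; exact hh)
    rw [geom_sum_eq hne1, div_pow, hu, hv]
    simp
lemma sum_proj (r : Module.End ℂ E) {k : ℕ} (hk : k ≠ 0) {ζ : ℂ}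
    (hζ : IsPrimitiveRoot ζ k) (hr : r ^ k = 1) :
    ∑ ℓ ∈ range k, proj r k (ζ ^ ℓ) = 1 := by
  have hz0 : ζ ≠ 0 := hζ.ne_zero hk
  unfold proj
  rw [← Finset.smul_sum, Finset.sum_comm]
  have hinner : ∀ j ∈ range k, (∑ ℓ ∈ range k, (ζ ^ ℓ)⁻¹ ^ j • r ^ j) =
      (if j = 0 then (k : ℂ) else 0) • r ^ j := by
    intro j hj
    rw [← Finset.sum_smul]
    congr 1
    have hrw : ∀ ℓ : ℕ, ((ζ ^ ℓ)⁻¹ : ℂ) ^ j = ((ζ ^ j)⁻¹) ^ ℓ := by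
      intro ℓ; rw [← inv_pow, ← pow_mul, ← inv_pow, ← pow_mul, mul_comm]
    rw [Finset.sum_congr rfl fun ℓ _ => hrw ℓ]
    rcases eq_or_ne j 0 with rfl | hj0
    · simp
    · rw [if_neg hj0]
      have h1 : ((ζ ^ j)⁻¹ : ℂ) ≠ 1 := by
        rw [inv_ne_one]
        exact hζ.pow_ne_one_of_pos_of_lt hj0 (mem_range.mp hj)
      have hk1 : ((ζ ^ j)⁻¹ : ℂ) ^ k = 1 := by
        have h2 : ((ζ ^ j : ℂ)) ^ k = 1 := by
          rw [← pow_mul, mul_comm, pow_mul, hζ.pow_eq_one, one_pow]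
        rw [inv_pow (ζ ^ j) k, h2, inv_one]
      rw [geom_sum_eq h1, hk1, sub_self, zero_div]
  rw [Finset.sum_congr rfl hinner,
    Finset.sum_eq_single_of_mem 0 (mem_range.mpr (Nat.pos_of_ne_zero hk))
      (fun b _ hb => by rw [if_neg hb, zero_smul])]
  rw [if_pos rfl, pow_zero, smul_smul, inv_mul_cancel₀ (Nat.cast_ne_zero.mpr hk), one_smul]

end Stmt5Aux

/-- With `k ≥ 1`, `E` a complex vector space, `wm, wp`
("w₋", "w₊") linear involutions with `(wp ∘ wm)^k = id`, `r = wp ∘ wm`,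
`ζ = e^{2πi/k}` and `E_ℓ` the `ζ^ℓ`-eigenspace of `r`: if `p ≠ 0` satisfies
`w₊ p = -p` and spans the full `(-1)`-eigenspace of `w₊`, then exactly one of
the following holds: `p ∈ E_0`; or `k` is even and `p ∈ E_{k/2}`; or there is
an integer `ℓ` with `0 < ℓ < k/2` and `p ∈ E_ℓ + E_{-ℓ}`. -/
theorem stmt5 (k : ℕ) (hk : 1 ≤ k)
    {E : Type*} [AddCommGroup E] [Module ℂ E]
    (wm wp : E →ₗ[ℂ] E)
    (hm : wm * wm = 1) (hp : wp * wp = 1)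
    (hord : (wp * wm) ^ k = 1)
    (ζ : ℂ) (hζ : ζ = Complex.exp (2 * Real.pi * Complex.I / k))
    (p : E) (hp0 : p ≠ 0) (hpeig : wp p = -p)
    (hspan : {x : E | wp x = -x} = {x : E | ∃ c : ℂ, x = c • p}) :
    (p ∈ rEig (wp * wm) ζ 0 ∧
      ¬(Even k ∧ p ∈ rEig (wp * wm) ζ ((k : ℤ) / 2)) ∧
      ¬(∃ ℓ : ℤ, 0 < ℓ ∧ 2 * ℓ < (k : ℤ) ∧
          p ∈ rEig (wp * wm) ζ ℓ ⊔ rEig (wp * wm) ζ (-ℓ))) ∨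
    (¬(p ∈ rEig (wp * wm) ζ 0) ∧
      (Even k ∧ p ∈ rEig (wp * wm) ζ ((k : ℤ) / 2)) ∧
      ¬(∃ ℓ : ℤ, 0 < ℓ ∧ 2 * ℓ < (k : ℤ) ∧
          p ∈ rEig (wp * wm) ζ ℓ ⊔ rEig (wp * wm) ζ (-ℓ))) ∨
    (¬(p ∈ rEig (wp * wm) ζ 0) ∧
      ¬(Even k ∧ p ∈ rEig (wp * wm) ζ ((k : ℤ) / 2)) ∧
      (∃ ℓ : ℤ, 0 < ℓ ∧ 2 * ℓ < (k : ℤ) ∧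
          p ∈ rEig (wp * wm) ζ ℓ ⊔ rEig (wp * wm) ζ (-ℓ))) := by
  classical
  have hk0 : k ≠ 0 := by omega
  set r : Module.End ℂ E := wp * wm with hrdef
  have hprim : IsPrimitiveRoot ζ k := by
    rw [hζ]; exact Complex.isPrimitiveRoot_exp k hk0
  have hz0 : ζ ≠ 0 := hprim.ne_zero hk0
  have hnk : ∀ a : ℕ, (ζ ^ a) ^ k = 1 := fun a => by
    rw [← pow_mul, mul_comm, pow_mul, hprim.pow_eq_one, one_pow]
  have hzk : ∀ a : ℤ, (ζ ^ a) ^ k = 1 := fun a => by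
    rw [← zpow_natCast (ζ ^ a), ← zpow_mul, mul_comm, zpow_mul, zpow_natCast,
      hprim.pow_eq_one, one_zpow]
  have hrk : r ^ k = 1 := hord
  have memEig : ∀ (a : ℤ) (x : E), x ∈ rEig r ζ a ↔ r x = ζ ^ a • x := by
    intro a x
    simp only [rEig, LinearMap.mem_ker, LinearMap.sub_apply, LinearMap.smul_apply,
      Module.End.one_apply, sub_eq_zero]
  -- non-congruence / congruence of powers of ζ
  have hndvd : ∀ x : ℤ, x ≠ 0 → -(k : ℤ) < x → x < k → ¬ (k : ℤ) ∣ x := by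
    intro x hx h1 h2 hdvd
    have h3 : (k : ℤ) ≤ |x| := Int.le_of_dvd (abs_pos.mpr hx) ((dvd_abs _ _).mpr hdvd)
    rcases abs_cases x with ⟨he, _⟩ | ⟨he, _⟩ <;> omega
  have hzne : ∀ a b : ℤ, ¬ ((k : ℤ) ∣ (a - b)) → (ζ : ℂ) ^ a ≠ ζ ^ b := by
    intro a b hnd h
    apply hnd
    rw [← hprim.zpow_eq_one_iff_dvd, zpow_sub₀ hz0, h, div_self (zpow_ne_zero _ hz0)]
  have hzeq : ∀ a b : ℤ, (k : ℤ) ∣ (a - b) → (ζ : ℂ) ^ a = ζ ^ b := by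
    intro a b hd
    have h1 : ζ ^ (a - b) = 1 := (hprim.zpow_eq_one_iff_dvd _).mpr hd
    calc ζ ^ a = ζ ^ (a - b + b) := by ring_nf
    _ = ζ ^ (a - b) * ζ ^ b := zpow_add₀ hz0 _ _
    _ = ζ ^ b := by rw [h1, one_mul]
  -- components of p
  set q : ℕ → E := fun m => Stmt5Aux.proj r k (ζ ^ m) p with hqdef
  have hq_eig : ∀ m, r (q m) = ζ ^ m • q m := by
    intro m
    have h := Stmt5Aux.r_mul_proj r hk0 (hnk m) hrk
    calc r (q m) = (r * Stmt5Aux.proj r k (ζ ^ m)) p := rfl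
    _ = ((ζ ^ m) • Stmt5Aux.proj r k (ζ ^ m)) p := by rw [h]
    _ = ζ ^ m • q m := rfl
  have hsum : ∑ m ∈ Finset.range k, q m = p := by
    have h := Stmt5Aux.sum_proj r hk0 hprim hrk
    calc ∑ m ∈ Finset.range k, q m
        = (∑ m ∈ Finset.range k, Stmt5Aux.proj r k (ζ ^ m)) p := by
          rw [LinearMap.sum_apply]
    _ = p := by rw [h]; rfl
  -- wp conjugation
  have hwpr : ∀ (u : ℂ) (x : E), u ≠ 0 → r x = u • x → r (wp x) = u⁻¹ • wp x := by
    intro u x hu0 hx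
    have hinv : (wm * wp) * (wp * wm) = 1 := by
      rw [mul_assoc, ← mul_assoc wp wp wm, hp, one_mul, hm]
    have h1 : wm (wp (r x)) = x := by
      have h := congrArg (fun f : Module.End ℂ E => f x) hinv
      simp only [Module.End.mul_apply, Module.End.one_apply] at h
      rw [hrdef]
      simp only [Module.End.mul_apply]
      exact h
    rw [hx, map_smul, map_smul] at h1
    have h2 : wm (wp x) = u⁻¹ • x := by
      have h3 := congrArg (fun y => u⁻¹ • y) h1
      simpa [smul_smul, inv_mul_cancel₀ hu0] using h3
    calc r (wp x) = wp (wm (wp x)) := rfl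
    _ = u⁻¹ • wp x := by rw [h2, map_smul]
  -- the negation index
  set neg : ℕ → ℕ := fun m => (k - m) % k with hnegdef
  have hneg_lt : ∀ m, neg m < k := fun m => Nat.mod_lt _ (by omega)
  have hneg0 : neg 0 = 0 := by simp [hnegdef]
  have hneg_eq : ∀ m, 0 < m → m < k → neg m = k - m := by
    intro m h1 h2
    exact Nat.mod_eq_of_lt (by omega)
  have hneg_mul : ∀ m, m < k → (ζ : ℂ) ^ neg m * ζ ^ m = 1 := by
    intro m hm
    rcases Nat.eq_zero_or_pos m with rfl | hm0
    · rw [hneg0]; simp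
    · rw [hneg_eq m hm0 hm, ← pow_add, show k - m + m = k by omega, hprim.pow_eq_one]
  have hneg_inv : ∀ m, m < k → (ζ : ℂ) ^ neg m = (ζ ^ m)⁻¹ := by
    intro m hm
    exact eq_inv_of_mul_eq_one_left (hneg_mul m hm)
  have hneg_neg : ∀ m, m < k → neg (neg m) = m := by
    intro m hm
    rcases Nat.eq_zero_or_pos m with rfl | hm0
    · rw [hneg0, hneg0]
    · rw [hneg_eq m hm0 hm, hneg_eq (k - m) (by omega) (by omega),
        show k - (k - m) = m by omega]
  -- wp acts on components
  have hwpq : ∀ m, m < k → wp (q m) = - q (neg m) := by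
    intro m hm
    have e1 : Stmt5Aux.proj r k (ζ ^ neg m) (wp p) = - q (neg m) := by
      rw [hpeig, map_neg]
    have e2 : Stmt5Aux.proj r k (ζ ^ neg m) (wp p) = wp (q m) := by
      have hps : wp p = ∑ m' ∈ Finset.range k, wp (q m') := by rw [← map_sum, hsum]
      rw [hps, map_sum]
      have hterm : ∀ m' ∈ Finset.range k,
          Stmt5Aux.proj r k (ζ ^ neg m) (wp (q m')) =
            if m' = m then wp (q m) else 0 := by
        intro m' hm'
        have hm'k := Finset.mem_range.mp hm'
        have heig : r (wp (q m')) = (ζ ^ m')⁻¹ • wp (q m') :=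
          hwpr _ _ (pow_ne_zero _ hz0) (hq_eig m')
        rw [Stmt5Aux.proj_apply_eig r hk0 (by rw [inv_pow, hnk m', inv_one])
          (hnk (neg m)) heig]
        rcases eq_or_ne m' m with rfl | hne
        · rw [if_pos rfl, if_pos (hneg_inv m' hm).symm]
        · rw [if_neg hne, if_neg]
          intro h
          rw [hneg_inv m hm] at h
          exact hne (hprim.pow_inj hm'k hm (inv_injective h))
      rw [Finset.sum_congr rfl hterm, Finset.sum_ite_eq' (Finset.range k) m
        (fun _ => wp (q m)), if_pos (Finset.mem_range.mpr hm)]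
    rw [← e2, e1]
  -- distinct eigenvalues
  have distinct : ∀ (u v : ℂ) (x : E), r x = u • x → r x = v • x → u ≠ v → x = 0 := by
    intro u v x h1 h2 huv
    have h3 : (u - v) • x = 0 := by rw [sub_smul, ← h1, ← h2, sub_self]
    exact (smul_eq_zero.mp h3).resolve_left (sub_ne_zero.mpr huv)
  -- find a nonzero component
  obtain ⟨m₀, hm₀k, hq0⟩ : ∃ m₀, m₀ < k ∧ q m₀ ≠ 0 := by
    by_contra h
    push_neg at h
    exact hp0 (by rw [← hsum]; exact Finset.sum_eq_zero fun m hm => h m (Finset.mem_range.mp hm))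
  -- the pair sum is a multiple of p
  obtain ⟨c, hc⟩ : ∃ c : ℂ, q m₀ + q (neg m₀) = c • p := by
    have hw : wp (q m₀ + q (neg m₀)) = -(q m₀ + q (neg m₀)) := by
      rw [map_add, hwpq m₀ hm₀k, hwpq (neg m₀) (hneg_lt m₀), hneg_neg m₀ hm₀k]
      abel
    have hmem : q m₀ + q (neg m₀) ∈ {x : E | wp x = -x} := hw
    rw [hspan] at hmem
    obtain ⟨c, hc⟩ := hmem
    exact ⟨c, hc⟩
  have hzmne : neg m₀ ≠ m₀ → (ζ : ℂ) ^ m₀ ≠ ζ ^ neg m₀ := by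
    intro hne h
    exact hne (hprim.pow_inj (hneg_lt m₀) hm₀k h.symm)
  have hcn : c ≠ 0 := by
    rintro rfl
    rw [zero_smul] at hc
    rcases eq_or_ne (neg m₀) m₀ with he | hne
    · rw [he] at hc
      apply hq0
      have h2 : (2 : ℂ) • q m₀ = 0 := by rw [two_smul]; exact hc
      exact (smul_eq_zero.mp h2).resolve_left two_ne_zero
    · have h1 : q m₀ = - q (neg m₀) := eq_neg_of_add_eq_zero_left hc
      have h3 : r (q m₀) = ζ ^ neg m₀ • q m₀ := by
        rw [h1, map_neg, hq_eig, smul_neg]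
      exact hq0 (distinct _ _ _ (hq_eig m₀) h3 (hzmne hne))
  have hpeq : p = c⁻¹ • q m₀ + c⁻¹ • q (neg m₀) := by
    rw [← smul_add, hc, inv_smul_smul₀ hcn]
  -- the key projection of p is nonzero
  have hproj_ne : Stmt5Aux.proj r k (ζ ^ m₀) p ≠ 0 := by
    rw [hpeq, map_add, map_smul, map_smul,
      Stmt5Aux.proj_apply_eig r hk0 (hnk m₀) (hnk m₀) (hq_eig m₀), if_pos rfl,
      Stmt5Aux.proj_apply_eig r hk0 (hnk (neg m₀)) (hnk m₀) (hq_eig (neg m₀))]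
    rcases eq_or_ne (neg m₀) m₀ with he | hne
    · rw [if_pos (by rw [he]), he, ← smul_add]
      intro hzero
      rcases smul_eq_zero.mp hzero with h | h
      · exact hcn (by simpa using h)
      · apply hq0
        have h2 : (2 : ℂ) • q m₀ = 0 := by rw [two_smul]; exact h
        exact (smul_eq_zero.mp h2).resolve_left two_ne_zero
    · rw [if_neg (fun h => hzmne hne h.symm), smul_zero, add_zero]
      intro hzero
      rcases smul_eq_zero.mp hzero with h | h
      · exact hcn (by simpa using h)
      · exact hq0 h
  -- the master exclusion lemma (zpow form)
  have Hexc : ∀ a b : ℤ, (ζ : ℂ) ^ a ≠ ζ ^ (m₀ : ℤ) → (ζ : ℂ) ^ b ≠ ζ ^ (m₀ : ℤ) →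
      p ∉ rEig r ζ a ⊔ rEig r ζ b := by
    intro a b ha hb hmem
    rw [zpow_natCast] at ha hb
    obtain ⟨x, hx, y, hy, hxy⟩ := Submodule.mem_sup.mp hmem
    apply hproj_ne
    rw [← hxy, map_add,
      Stmt5Aux.proj_apply_eig r hk0 (hzk a) (hnk m₀) ((memEig a x).mp hx),
      Stmt5Aux.proj_apply_eig r hk0 (hzk b) (hnk m₀) ((memEig b y).mp hy),
      if_neg ha, if_neg hb, add_zero]
  -- membership lemmas for the actual class (zpow form)
  have Hmem : ∀ a : ℤ, (ζ : ℂ) ^ a = ζ ^ (m₀ : ℤ) → c⁻¹ • q m₀ ∈ rEig r ζ a := by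
    intro a h
    rw [zpow_natCast] at h
    rw [memEig, map_smul, hq_eig, h, smul_comm]
  have Hmem' : ∀ a : ℤ, (ζ : ℂ) ^ a = ζ ^ ((neg m₀ : ℕ) : ℤ) →
      c⁻¹ • q (neg m₀) ∈ rEig r ζ a := by
    intro a h
    rw [zpow_natCast] at h
    rw [memEig, map_smul, hq_eig, h, smul_comm]
  -- case split on the class of m₀
  rcases Nat.eq_zero_or_pos m₀ with rfl | hm₀pos
  · -- class {0} : p is in E₀
    left
    have hmem0 : p ∈ rEig r ζ 0 := by
      rw [memEig, zpow_zero, one_smul, hpeq, hneg0, map_add, map_smul, hq_eig 0,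
        pow_zero, one_smul]
    refine ⟨hmem0, ?_, ?_⟩
    · rintro ⟨⟨t, ht⟩, hmem⟩
      refine Hexc ((k : ℤ) / 2) ((k : ℤ) / 2) ?_ ?_ (Submodule.mem_sup_left hmem) <;>
        exact hzne _ _ (hndvd _ (by omega) (by omega) (by omega))
    · rintro ⟨ℓ, hl1, hl2, hmem⟩
      exact Hexc ℓ (-ℓ)
        (hzne _ _ (hndvd _ (by omega) (by omega) (by omega)))
        (hzne _ _ (hndvd _ (by omega) (by omega) (by omega))) hmem
  · rcases eq_or_ne (2 * m₀) k with h2m | h2m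
    · -- class {k/2}
      right; left
      have hnegm : neg m₀ = m₀ := by rw [hneg_eq m₀ hm₀pos hm₀k]; omega
      have hkd2 : (k : ℤ) / 2 = (m₀ : ℤ) := by omega
      have hmemh : p ∈ rEig r ζ ((k : ℤ) / 2) := by
        rw [hpeq, hnegm]
        have h := Hmem ((k : ℤ) / 2) (by rw [hkd2])
        exact Submodule.add_mem _ h h
      refine ⟨?_, ⟨⟨m₀, by omega⟩, hmemh⟩, ?_⟩
      · intro hmem
        refine Hexc 0 0 ?_ ?_ (Submodule.mem_sup_left hmem) <;>
          exact hzne _ _ (hndvd _ (by omega) (by omega) (by omega))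
      · rintro ⟨ℓ, hl1, hl2, hmem⟩
        exact Hexc ℓ (-ℓ)
          (hzne _ _ (hndvd _ (by omega) (by omega) (by omega)))
          (hzne _ _ (hndvd _ (by omega) (by omega) (by omega))) hmem
    · -- class {m, k - m} with 0 < m < k/2
      right; right
      have hnegm : neg m₀ = k - m₀ := hneg_eq m₀ hm₀pos hm₀k
      refine ⟨?_, ?_, ?_⟩
      · intro hmem
        refine Hexc 0 0 ?_ ?_ (Submodule.mem_sup_left hmem) <;>
          exact hzne _ _ (hndvd _ (by omega) (by omega) (by omega))
      · rintro ⟨⟨t, ht⟩, hmem⟩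
        refine Hexc ((k : ℤ) / 2) ((k : ℤ) / 2) ?_ ?_ (Submodule.mem_sup_left hmem) <;>
          exact hzne _ _ (hndvd _ (by omega) (by omega) (by omega))
      · rcases Nat.lt_or_ge m₀ (k - m₀) with hlt | hge
        · refine ⟨(m₀ : ℤ), by omega, by omega, ?_⟩
          refine Submodule.mem_sup.mpr ⟨c⁻¹ • q m₀, Hmem _ rfl,
            c⁻¹ • q (neg m₀), Hmem' _ ?_, hpeq.symm⟩
          exact hzeq _ _ ⟨-1, by omega⟩
        · refine ⟨((k : ℤ) - (m₀ : ℤ)), by omega, by omega, ?_⟩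
          refine Submodule.mem_sup.mpr ⟨c⁻¹ • q (neg m₀), Hmem' _ ?_,
            c⁻¹ • q m₀, Hmem _ ?_, by rw [add_comm]; exact hpeq.symm⟩
          · exact hzeq _ _ ⟨0, by omega⟩
          · exact hzeq _ _ ⟨-1, by omega⟩
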